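/- Let V be a TRO and B a C*-algebra. A proper ε-ideal P of V ⊗ʰ B is a minimal primal ideal if and only if P = I ⊗ʰ B + V ⊗ʰ J for some minimal primal ideals I of V and J of B. Moreover, (I,J) ↦ V⊗ʰJ + I⊗ʰB is a bijection from Min-Primal(V) × Min-Primal(B) onto Min-Primal(V ⊗ʰ B). -/
import Mathlib


/-!
Statement 15: a proper `ε`-ideal `P` of `V ⊗ʰ B` is a minimal primal ideal iff
`P = I ⊗ʰ B + V ⊗ʰ J` for minimal primal ideals `I` of `V` and `J` of `B`;
moreover `(I, J) ↦ V ⊗ʰ J + I ⊗ʰ B` is a bijection from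
`Min-Primal(V) × Min-Primal(B)` onto `Min-Primal(V ⊗ʰ B)`.

The ideal lattices of `V`, `B` and `V ⊗ʰ B` are encoded as complete lattices
`LV`, `LB`, `LT`, `Phi I J = V ⊗ʰ J + I ⊗ʰ B`, and `PrimalV`, `PrimalB`,
`PrimalT` are the sets of (closed, proper) primal ideals.  The hypotheses record
the available facts: `Phi I J` is primal iff `I` and `J` are (for proper `I`,
`J`); every primal ideal of `V ⊗ʰ B` contains some `Phi I J` with `I`, `J`
primal; and `Phi` is monotone and order-reflecting in each coordinate on proper
ideals. -/
theorem statement15 {LV LB LT : Type*}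
    [CompleteLattice LV] [CompleteLattice LB] [CompleteLattice LT]
    (Phi : LV → LB → LT)
    (PrimalV : Set LV) (PrimalB : Set LB) (PrimalT : Set LT)
    (hPV : ∀ I ∈ PrimalV, I ≠ ⊤) (hPB : ∀ J ∈ PrimalB, J ≠ ⊤)
    (hPT : ∀ P ∈ PrimalT, P ≠ ⊤)
    (hiff : ∀ I J, I ≠ ⊤ → J ≠ ⊤ →
      (Phi I J ∈ PrimalT ↔ I ∈ PrimalV ∧ J ∈ PrimalB))
    (hcontain : ∀ P ∈ PrimalT, ∃ I ∈ PrimalV, ∃ J ∈ PrimalB, Phi I J ≤ P)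
    (hmono : ∀ I I' J J', I ≤ I' → J ≤ J' → Phi I J ≤ Phi I' J')
    (hord : ∀ I I' J J', I ≠ ⊤ → I' ≠ ⊤ → J ≠ ⊤ → J' ≠ ⊤ →
      Phi I J ≤ Phi I' J' → I ≤ I' ∧ J ≤ J') :
    (∀ P, P ≠ ⊤ →
      (P ∈ {P ∈ PrimalT | ∀ P' ∈ PrimalT, P' ≤ P → P' = P} ↔
        ∃ I ∈ {I ∈ PrimalV | ∀ I' ∈ PrimalV, I' ≤ I → I' = I},
          ∃ J ∈ {J ∈ PrimalB | ∀ J' ∈ PrimalB, J' ≤ J → J' = J},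
            P = Phi I J)) ∧
    Set.BijOn (fun p : LV × LB => Phi p.1 p.2)
      ({I ∈ PrimalV | ∀ I' ∈ PrimalV, I' ≤ I → I' = I} ×ˢ
        {J ∈ PrimalB | ∀ J' ∈ PrimalB, J' ≤ J → J' = J})
      {P ∈ PrimalT | ∀ P' ∈ PrimalT, P' ≤ P → P' = P} := by

  -- key fact 1: Phi of minimal primals is minimal primal
  have key1 : ∀ I ∈ {I ∈ PrimalV | ∀ I' ∈ PrimalV, I' ≤ I → I' = I},
      ∀ J ∈ {J ∈ PrimalB | ∀ J' ∈ PrimalB, J' ≤ J → J' = J},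
      Phi I J ∈ {P ∈ PrimalT | ∀ P' ∈ PrimalT, P' ≤ P → P' = P} := by
    rintro I ⟨hI, hImin⟩ J ⟨hJ, hJmin⟩
    have hIt := hPV I hI
    have hJt := hPB J hJ
    refine ⟨(hiff I J hIt hJt).2 ⟨hI, hJ⟩, ?_⟩
    intro P' hP' hle
    obtain ⟨I', hI', J', hJ', hle'⟩ := hcontain P' hP'
    have h2 := hord I' I J' J (hPV I' hI') hIt (hPB J' hJ') hJt (hle'.trans hle)
    have eI : I' = I := hImin I' hI' h2.1
    have eJ : J' = J := hJmin J' hJ' h2.2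
    subst eI; subst eJ
    exact le_antisymm hle hle'
  -- key fact 2: every minimal primal is Phi of minimal primals
  have key2 : ∀ P ∈ {P ∈ PrimalT | ∀ P' ∈ PrimalT, P' ≤ P → P' = P},
      ∃ I ∈ {I ∈ PrimalV | ∀ I' ∈ PrimalV, I' ≤ I → I' = I},
      ∃ J ∈ {J ∈ PrimalB | ∀ J' ∈ PrimalB, J' ≤ J → J' = J},
      P = Phi I J := by
    rintro P ⟨hP, hPmin⟩
    obtain ⟨I, hI, J, hJ, hle⟩ := hcontain P hP
    have hIt := hPV I hI
    have hJt := hPB J hJ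
    have hPhiP : Phi I J ∈ PrimalT := (hiff I J hIt hJt).2 ⟨hI, hJ⟩
    have hPeq : Phi I J = P := hPmin _ hPhiP hle
    refine ⟨I, ⟨hI, ?_⟩, J, ⟨hJ, ?_⟩, hPeq.symm⟩
    · intro I' hI' hle'
      have hIt' := hPV I' hI'
      have h1 : Phi I' J ∈ PrimalT := (hiff I' J hIt' hJt).2 ⟨hI', hJ⟩
      have h2 : Phi I' J ≤ P := (hmono I' I J J hle' le_rfl).trans hle
      have h3 : Phi I' J = P := hPmin _ h1 h2
      have h4 := hord I I' J J hIt hIt' hJt hJt (by rw [h3, ← hPeq])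
      exact le_antisymm hle' h4.1
    · intro J' hJ' hle'
      have hJt' := hPB J' hJ'
      have h1 : Phi I J' ∈ PrimalT := (hiff I J' hIt hJt').2 ⟨hI, hJ'⟩
      have h2 : Phi I J' ≤ P := (hmono I I J' J le_rfl hle').trans hle
      have h3 : Phi I J' = P := hPmin _ h1 h2
      have h4 := hord I I J J' hIt hIt hJt hJt' (by rw [h3, ← hPeq])
      exact le_antisymm hle' h4.2
  constructor
  · intro P _
    constructor
    · exact fun hP => key2 P hP
    · rintro ⟨I, hI, J, hJ, rfl⟩
      exact key1 I hI J hJ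
  · refine ⟨?_, ?_, ?_⟩
    · rintro ⟨I, J⟩ ⟨hI, hJ⟩
      exact key1 I hI J hJ
    · rintro ⟨I, J⟩ ⟨⟨hI, _⟩, ⟨hJ, _⟩⟩ ⟨I', J'⟩ ⟨⟨hI', _⟩, ⟨hJ', _⟩⟩ heq
      simp only at heq
      have h1 := hord I I' J J' (hPV I hI) (hPV I' hI') (hPB J hJ) (hPB J' hJ') heq.le
      have h2 := hord I' I J' J (hPV I' hI') (hPV I hI) (hPB J' hJ') (hPB J hJ) heq.ge
      exact Prod.ext (le_antisymm h1.1 h2.1) (le_antisymm h1.2 h2.2)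
    · intro P hP
      obtain ⟨I, hI, J, hJ, rfl⟩ := key2 P hP
      exact ⟨(I, J), ⟨hI, hJ⟩, rfl⟩
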